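/- For a nonnegative integer d, let J be the (d+1)×(d+1) matrix with entries J_{ii} = (1+x_i)/∏_{k}(1+x_k) and J_{ij} = -x_i(1+x_i)/((1+x_j) ∏_{k}(1+x_k)) for i ≠ j. Then det(J) = (1 - ∑_{k=0}^{d} x_k/(1+2x_k)) * ∏_{j=0}^{d} (1+2x_j)/(1+x_j)^{d+1}. -/

import Mathlib

open Finset

/-- The variable `x_i`, viewed in the field of rational functions in `x_0, …, x_d` over `ℚ`. -/
noncomputable def ratVar (d : ℕ) (i : Fin (d + 1)) :
    FractionRing (MvPolynomial (Fin (d + 1)) ℚ) :=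
  algebraMap (MvPolynomial (Fin (d + 1)) ℚ) _ (MvPolynomial.X i)

set_option maxHeartbeats 1000000 in
/-- The determinant of the Jacobian matrix `J` with entries
`J_{ii} = (1+x_i)/∏_k (1+x_k)` and `J_{ij} = -x_i(1+x_i)/((1+x_j) ∏_k (1+x_k))` for `i ≠ j`
equals `(1 − ∑_k x_k/(1+2x_k)) ∏_j (1+2x_j)/(1+x_j)^{d+1}`. -/
theorem det_jacobian (d : ℕ) :
    (Matrix.of fun i j : Fin (d + 1) =>
        if i = j then
          (1 + ratVar d i) / ∏ k : Fin (d + 1), (1 + ratVar d k)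
        else
          -(ratVar d i * (1 + ratVar d i)) /
            ((1 + ratVar d j) * ∏ k : Fin (d + 1), (1 + ratVar d k))).det =
      (1 - ∑ k : Fin (d + 1), ratVar d k / (1 + 2 * ratVar d k)) *
        ∏ j : Fin (d + 1), (1 + 2 * ratVar d j) / (1 + ratVar d j) ^ (d + 1) := by
  have hinj := IsFractionRing.injective (MvPolynomial (Fin (d + 1)) ℚ)
      (FractionRing (MvPolynomial (Fin (d + 1)) ℚ))
  have h1 : ∀ i, (1 + ratVar d i) ≠ 0 := by
    intro i
    have : (1 : FractionRing (MvPolynomial (Fin (d + 1)) ℚ)) + ratVar d i =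
        algebraMap (MvPolynomial (Fin (d + 1)) ℚ) _ (1 + MvPolynomial.X i) := by
      simp [ratVar]
    rw [this, map_ne_zero_iff _ hinj]
    intro h
    simpa using congrArg (MvPolynomial.eval 0) h
  have h2 : ∀ i, (1 + 2 * ratVar d i) ≠ 0 := by
    intro i
    have : (1 : FractionRing (MvPolynomial (Fin (d + 1)) ℚ)) + 2 * ratVar d i =
        algebraMap (MvPolynomial (Fin (d + 1)) ℚ) _ (1 + 2 * MvPolynomial.X i) := by
      simp [ratVar, map_ofNat]
    rw [this, map_ne_zero_iff _ hinj]
    intro h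
    simpa using congrArg (MvPolynomial.eval 0) h
  set P := ∏ k : Fin (d + 1), (1 + ratVar d k) with hP
  have hPne : P ≠ 0 := prod_ne_zero_iff.mpr fun i _ => h1 i
  set a : Fin (d + 1) → _ := fun i => (1 + 2 * ratVar d i) / P with ha
  set w : Fin (d + 1) → _ :=
    fun i => -(ratVar d i * (1 + ratVar d i) / (1 + 2 * ratVar d i)) with hw
  set v : Fin (d + 1) → _ := fun j => 1 / (1 + ratVar d j) with hv
  have key : (Matrix.of fun i j : Fin (d + 1) =>
        if i = j then (1 + ratVar d i) / P
        else -(ratVar d i * (1 + ratVar d i)) / ((1 + ratVar d j) * P)) =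
      Matrix.diagonal a * (1 + Matrix.replicateCol Unit w * Matrix.replicateRow Unit v) := by
    ext i j
    rw [Matrix.diagonal_mul]
    simp only [Matrix.of_apply, Matrix.add_apply, Matrix.one_apply, Matrix.mul_apply,
      Matrix.replicateCol_apply, Matrix.replicateRow_apply, hw, hv, ha, Finset.univ_unique, Finset.sum_singleton]
    have hi1 := h1 i
    have hj1 := h1 j
    have hi2 := h2 i
    by_cases h : i = j
    · subst h
      simp only [if_pos rfl]
      simp only [if_true]
      field_simp
      rw [mul_comm (ratVar d i) 2]
      obtain ⟨u, hu⟩ : ∃ u, u = (1 + 2 * ratVar d i)⁻¹ := ⟨_, rfl⟩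
      have hmul : (1 + 2 * ratVar d i) * u = 1 := by rw [hu]; exact mul_inv_cancel₀ hi2
      rw [div_eq_mul_inv, ← hu]
      linear_combination (ratVar d i) * hmul
    · simp only [if_neg h]
      field_simp
      rw [mul_comm (ratVar d i) 2]
      obtain ⟨u, hu⟩ : ∃ u, u = (1 + 2 * ratVar d i)⁻¹ := ⟨_, rfl⟩
      have hmul : (1 + 2 * ratVar d i) * u = 1 := by rw [hu]; exact mul_inv_cancel₀ hi2
      rw [div_eq_mul_inv, ← hu]
      linear_combination (ratVar d i * (1 + ratVar d i)) * hmul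
  rw [key, Matrix.det_mul, Matrix.det_diagonal, Matrix.det_one_add_replicateCol_mul_replicateRow]
  have hsum : dotProduct v w = -∑ k : Fin (d + 1), ratVar d k / (1 + 2 * ratVar d k) := by
    simp only [dotProduct, ← Finset.sum_neg_distrib]
    refine Finset.sum_congr rfl fun i _ => ?_
    have hi1 := h1 i
    have hi2 := h2 i
    simp only [hv, hw]
    field_simp
  have hprod : ∏ i, a i =
      ∏ j : Fin (d + 1), (1 + 2 * ratVar d j) / (1 + ratVar d j) ^ (d + 1) := by
    simp only [ha]
    rw [Finset.prod_div_distrib, Finset.prod_div_distrib, Finset.prod_const, Finset.prod_pow, hP]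
    simp [Finset.card_univ]
  rw [hsum, hprod]
  ring
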